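/- Let 0<q<1 be real, let a,b,c,ã,b̃,c̃ be complex-valued functions, Φ a function of two complex variables, h a function of one complex variable, ξ a nonzero complex number, and x a nonzero complex number. Assume: (1) a(x)Φ(x/q,s)+b(x)Φ(x,s)+c(x)Φ(qx,s) = ã(s)Φ(x,s/q)+b̃(s)Φ(x,s)+c̃(s)Φ(x,qs) for s = q^{n}ξ for every integer n; (2) q·ã(qs)h(qs) + b̃(s)h(s) + q^{−1}·c̃(s/q)h(s/q) = 0 for s = q^{n}ξ for every integer n; (3) for each y ∈ {x, qx, x/q} the bilateral series g(y) = (1−q)·Σ_{n∈ℤ} q^{n}ξ·h(q^{n}ξ)·Φ(y,q^{n}ξ) converges (both one-sided series converge); (4) the limits g1(x) = lim_{L→+∞}[q·s·ã(qs)h(qs)Φ(x,s) − s·c̃(s)h(s)Φ(x,qs)] at s=q^{L}ξ and g2(x) = lim_{K→−∞}[q·s·ã(qs)h(qs)Φ(x,s) − s·c̃(s)h(s)Φ(x,qs)] at s=q^{K−1}ξ exist. Then a(x)g(x/q) + b(x)g(x) + c(x)g(qx) = (1−q)·(g2(x) − g1(x)). -/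
import Mathlib


open Filter Topology

/-- The infinite q-Pochhammer symbol `(a;q)_∞ = ∏_{j=0}^∞ (1 - q^j a)`. -/
noncomputable def qPochInf (q : ℝ) (a : ℂ) : ℂ := ∏' j : ℕ, (1 - (q : ℂ) ^ j * a)

/-- `q^r` for a real exponent `r`, using the principal branch of the complex power. -/
noncomputable def qpow (q : ℝ) (r : ℝ) : ℂ := (q : ℂ) ^ (r : ℂ)

/-- The bilateral series `Σ_{n∈ℤ} f n` converges to `S`: the series over `n ≥ 0` and the
series over `n < 0` both converge, with sum `S`. -/
def HasBilatSum (f : ℤ → ℂ) (S : ℂ) : Prop :=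
  ∃ Sp Sm : ℂ,
    Filter.Tendsto (fun N : ℕ => ∑ n ∈ Finset.range N, f n) Filter.atTop (nhds Sp) ∧
    Filter.Tendsto (fun N : ℕ => ∑ n ∈ Finset.range N, f (-(n : ℤ) - 1)) Filter.atTop (nhds Sm) ∧
    S = Sp + Sm

theorem stmt10 (q : ℝ) (hq0 : 0 < q) (hq1 : q < 1)
    (a b c ta tb tc : ℂ → ℂ) (Φ : ℂ → ℂ → ℂ) (h : ℂ → ℂ)
    (ξ x : ℂ) (hξ : ξ ≠ 0) (hx : x ≠ 0)
    (hker : ∀ n : ℤ, ∀ s : ℂ, s = (q : ℂ) ^ n * ξ →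
      a x * Φ (x / (q : ℂ)) s + b x * Φ x s + c x * Φ ((q : ℂ) * x) s
        = ta s * Φ x (s / (q : ℂ)) + tb s * Φ x s + tc s * Φ x ((q : ℂ) * s))
    (hh : ∀ n : ℤ, ∀ s : ℂ, s = (q : ℂ) ^ n * ξ →
      (q : ℂ) * ta ((q : ℂ) * s) * h ((q : ℂ) * s) + tb s * h s
        + (q : ℂ)⁻¹ * tc (s / (q : ℂ)) * h (s / (q : ℂ)) = 0)
    (G : ℂ → ℂ)
    (hconv : ∀ y : ℂ, y = x ∨ y = (q : ℂ) * x ∨ y = x / (q : ℂ) →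
      HasBilatSum (fun n : ℤ =>
        (1 - (q : ℂ)) * ((q : ℂ) ^ n * ξ) * h ((q : ℂ) ^ n * ξ) * Φ y ((q : ℂ) ^ n * ξ)) (G y))
    (g1 g2 : ℂ)
    (hg1 : Filter.Tendsto (fun L : ℤ =>
        (q : ℂ) * ((q : ℂ) ^ L * ξ) * ta ((q : ℂ) * ((q : ℂ) ^ L * ξ)) *
            h ((q : ℂ) * ((q : ℂ) ^ L * ξ)) * Φ x ((q : ℂ) ^ L * ξ)
          - ((q : ℂ) ^ L * ξ) * tc ((q : ℂ) ^ L * ξ) * h ((q : ℂ) ^ L * ξ) *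
            Φ x ((q : ℂ) * ((q : ℂ) ^ L * ξ))) Filter.atTop (nhds g1))
    (hg2 : Filter.Tendsto (fun K : ℤ =>
        (q : ℂ) * ((q : ℂ) ^ (K - 1) * ξ) * ta ((q : ℂ) * ((q : ℂ) ^ (K - 1) * ξ)) *
            h ((q : ℂ) * ((q : ℂ) ^ (K - 1) * ξ)) * Φ x ((q : ℂ) ^ (K - 1) * ξ)
          - ((q : ℂ) ^ (K - 1) * ξ) * tc ((q : ℂ) ^ (K - 1) * ξ) * h ((q : ℂ) ^ (K - 1) * ξ) *
            Φ x ((q : ℂ) * ((q : ℂ) ^ (K - 1) * ξ))) Filter.atBot (nhds g2)) :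
    a x * G (x / (q : ℂ)) + b x * G x + c x * G ((q : ℂ) * x)
      = (1 - (q : ℂ)) * (g2 - g1) := by

  have hq : (q : ℂ) ≠ 0 := by
    exact_mod_cast hq0.ne'
  set S : ℤ → ℂ := fun n => (q : ℂ) ^ n * ξ with hS
  set F : ℤ → ℂ := fun n =>
    (q : ℂ) * S n * ta ((q : ℂ) * S n) * h ((q : ℂ) * S n) * Φ x (S n)
      - S n * tc (S n) * h (S n) * Φ x ((q : ℂ) * S n) with hFdef
  have hg1' : Filter.Tendsto F Filter.atTop (nhds g1) := hg1
  have hg2' : Filter.Tendsto (fun K : ℤ => F (K - 1)) Filter.atBot (nhds g2) := hg2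
  have key : ∀ n : ℤ,
      a x * ((1 - (q : ℂ)) * S n * h (S n) * Φ (x / (q : ℂ)) (S n))
        + b x * ((1 - (q : ℂ)) * S n * h (S n) * Φ x (S n))
        + c x * ((1 - (q : ℂ)) * S n * h (S n) * Φ ((q : ℂ) * x) (S n))
        = (1 - (q : ℂ)) * (F (n - 1) - F n) := by
    intro n
    have h1 := hker n (S n) rfl
    have h2 := hh n (S n) rfl
    have e1 : S (n - 1) = S n / (q : ℂ) := by
      simp only [hS]
      rw [zpow_sub_one₀ hq]
      ring
    have e2 : (q : ℂ) * S (n - 1) = S n := by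
      rw [e1]; field_simp
    simp only [hFdef]
    rw [e2, e1]
    linear_combination ((1 - (q : ℂ)) * S n * h (S n)) * h1
      + ((1 - (q : ℂ)) * S n * Φ x (S n)) * h2
  obtain ⟨Sp1, Sm1, hp1, hm1, hG1⟩ := hconv (x / (q : ℂ)) (Or.inr (Or.inr rfl))
  obtain ⟨Sp2, Sm2, hp2, hm2, hG2⟩ := hconv x (Or.inl rfl)
  obtain ⟨Sp3, Sm3, hp3, hm3, hG3⟩ := hconv ((q : ℂ) * x) (Or.inr (Or.inl rfl))
  -- positive side telescoping
  have htelp : ∀ N : ℕ, ∑ n ∈ Finset.range N, (F ((n : ℤ) - 1) - F (n : ℤ))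
      = F (-1) - F ((N : ℤ) - 1) := by
    intro N
    have h0 := Finset.sum_range_sub' (fun k : ℕ => F ((k : ℤ) - 1)) N
    simp only [Nat.cast_add, Nat.cast_one, Nat.cast_zero, add_sub_cancel_right,
      zero_sub] at h0
    exact h0
  have htelm : ∀ N : ℕ, ∑ n ∈ Finset.range N, (F (-(n : ℤ) - 1 - 1) - F (-(n : ℤ) - 1))
      = F (-(N : ℤ) - 1) - F (-1) := by
    intro N
    have h0 := Finset.sum_range_sub (fun k : ℕ => F (-(k : ℤ) - 1)) N
    simp only [Nat.cast_add, Nat.cast_one, Nat.cast_zero, neg_zero, zero_sub] at h0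
    rw [← h0]
    refine Finset.sum_congr rfl fun n _ => ?_
    congr 1
    congr 1
    ring
  -- limits
  have hcast : Filter.Tendsto (fun N : ℕ => (N : ℤ) - 1) Filter.atTop Filter.atTop := by
    apply Filter.tendsto_atTop_atTop.mpr
    intro b
    exact ⟨(b + 1).toNat, fun n hn => by omega⟩
  have hlim1 : Filter.Tendsto (fun N : ℕ => F ((N : ℤ) - 1)) Filter.atTop (nhds g1) :=
    hg1'.comp hcast
  have hncast : Filter.Tendsto (fun N : ℕ => -(N : ℤ)) Filter.atTop Filter.atBot := by
    apply Filter.tendsto_atTop_atBot.mpr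
    intro b
    exact ⟨(-b).toNat, fun n hn => by omega⟩
  have hlim2 : Filter.Tendsto (fun N : ℕ => F (-(N : ℤ) - 1)) Filter.atTop (nhds g2) :=
    hg2'.comp hncast
  -- combined positive partial sums
  have hPpos : Filter.Tendsto (fun N : ℕ =>
      a x * ∑ n ∈ Finset.range N, ((1 - (q : ℂ)) * S n * h (S n) * Φ (x / (q : ℂ)) (S n))
      + b x * ∑ n ∈ Finset.range N, ((1 - (q : ℂ)) * S n * h (S n) * Φ x (S n))
      + c x * ∑ n ∈ Finset.range N, ((1 - (q : ℂ)) * S n * h (S n) * Φ ((q : ℂ) * x) (S n)))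
      Filter.atTop (nhds (a x * Sp1 + b x * Sp2 + c x * Sp3)) :=
    ((hp1.const_mul (a x)).add (hp2.const_mul (b x))).add (hp3.const_mul (c x))
  have hPpos2 : Filter.Tendsto (fun N : ℕ =>
      a x * ∑ n ∈ Finset.range N, ((1 - (q : ℂ)) * S n * h (S n) * Φ (x / (q : ℂ)) (S n))
      + b x * ∑ n ∈ Finset.range N, ((1 - (q : ℂ)) * S n * h (S n) * Φ x (S n))
      + c x * ∑ n ∈ Finset.range N, ((1 - (q : ℂ)) * S n * h (S n) * Φ ((q : ℂ) * x) (S n)))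
      Filter.atTop (nhds ((1 - (q : ℂ)) * (F (-1) - g1))) := by
    have base := ((tendsto_const_nhds (x := F (-1))).sub hlim1).const_mul (1 - (q : ℂ))
    refine base.congr fun N => ?_
    rw [Finset.mul_sum, Finset.mul_sum, Finset.mul_sum, ← Finset.sum_add_distrib,
      ← Finset.sum_add_distrib]
    rw [Finset.sum_congr (rfl : Finset.range N = Finset.range N) fun (n : ℕ) _ => key (n : ℤ), ← Finset.mul_sum, htelp N]
  have eqpos : a x * Sp1 + b x * Sp2 + c x * Sp3 = (1 - (q : ℂ)) * (F (-1) - g1) :=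
    tendsto_nhds_unique hPpos hPpos2
  -- combined negative partial sums
  have hPneg : Filter.Tendsto (fun N : ℕ =>
      a x * ∑ n ∈ Finset.range N,
        ((1 - (q : ℂ)) * S (-(n : ℤ) - 1) * h (S (-(n : ℤ) - 1)) * Φ (x / (q : ℂ)) (S (-(n : ℤ) - 1)))
      + b x * ∑ n ∈ Finset.range N,
        ((1 - (q : ℂ)) * S (-(n : ℤ) - 1) * h (S (-(n : ℤ) - 1)) * Φ x (S (-(n : ℤ) - 1)))
      + c x * ∑ n ∈ Finset.range N,
        ((1 - (q : ℂ)) * S (-(n : ℤ) - 1) * h (S (-(n : ℤ) - 1)) * Φ ((q : ℂ) * x) (S (-(n : ℤ) - 1))))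
      Filter.atTop (nhds (a x * Sm1 + b x * Sm2 + c x * Sm3)) :=
    ((hm1.const_mul (a x)).add (hm2.const_mul (b x))).add (hm3.const_mul (c x))
  have hPneg2 : Filter.Tendsto (fun N : ℕ =>
      a x * ∑ n ∈ Finset.range N,
        ((1 - (q : ℂ)) * S (-(n : ℤ) - 1) * h (S (-(n : ℤ) - 1)) * Φ (x / (q : ℂ)) (S (-(n : ℤ) - 1)))
      + b x * ∑ n ∈ Finset.range N,
        ((1 - (q : ℂ)) * S (-(n : ℤ) - 1) * h (S (-(n : ℤ) - 1)) * Φ x (S (-(n : ℤ) - 1)))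
      + c x * ∑ n ∈ Finset.range N,
        ((1 - (q : ℂ)) * S (-(n : ℤ) - 1) * h (S (-(n : ℤ) - 1)) * Φ ((q : ℂ) * x) (S (-(n : ℤ) - 1))))
      Filter.atTop (nhds ((1 - (q : ℂ)) * (g2 - F (-1)))) := by
    have base := (hlim2.sub (tendsto_const_nhds (x := F (-1)))).const_mul (1 - (q : ℂ))
    refine base.congr fun N => ?_
    rw [Finset.mul_sum, Finset.mul_sum, Finset.mul_sum, ← Finset.sum_add_distrib,
      ← Finset.sum_add_distrib]
    rw [Finset.sum_congr (rfl : Finset.range N = Finset.range N) fun (n : ℕ) _ => key (-(n : ℤ) - 1), ← Finset.mul_sum, htelm N]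
  have eqneg : a x * Sm1 + b x * Sm2 + c x * Sm3 = (1 - (q : ℂ)) * (g2 - F (-1)) :=
    tendsto_nhds_unique hPneg hPneg2
  linear_combination (a x) * hG1 + (b x) * hG2 + (c x) * hG3 + eqpos + eqneg
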